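/- If m is a fundamental tuple of p partitions of n, then p ≤ |idx(m)|/2 + 4. -/

import Mathlib

/-- The index of rigidity of a tuple of `p` partitions of `n`. -/
def idx (p n : ℕ) (m : Fin p → List ℕ) : ℤ :=
  2 * (n : ℤ) ^ 2 - ∑ j : Fin p, ((n : ℤ) ^ 2 - ((m j).map (fun x => (x : ℤ) ^ 2)).sum)

/-- `m` is a tuple of `p` partitions of `n`: each `m j` is a monotone non-increasing
list of positive integers summing to `n` with at least two parts. -/
def IsTuple (p n : ℕ) (m : Fin p → List ℕ) : Prop :=
  0 < n ∧ ∀ j, (m j).Pairwise (· ≥ ·) ∧ (∀ x ∈ m j, 0 < x) ∧ (m j).sum = n ∧ 2 ≤ (m j).length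

/-- The tuple is indivisible: no integer `k ≥ 2` divides all the entries. -/
def Indivisible (p : ℕ) (m : Fin p → List ℕ) : Prop :=
  ∀ k : ℕ, (∀ j, ∀ x ∈ m j, k ∣ x) → k = 1

/-- The tuple is basic: it is a tuple of partitions, `2n ≤ Σⱼ (n − m_{j,1})`,
and it is indivisible. -/
def IsBasic (p n : ℕ) (m : Fin p → List ℕ) : Prop :=
  IsTuple p n m ∧ 2 * (n : ℤ) ≤ (∑ j : Fin p, ((n : ℤ) - ((m j).headI : ℤ)))
    ∧ Indivisible p m

/-- The tuple is fundamental: it is basic, or it is a positive integer multiple `k·m'`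
of a basic tuple `m'` with `idx m' ≠ 0`. -/
def IsFundamental (p n : ℕ) (m : Fin p → List ℕ) : Prop :=
  ∃ (k n' : ℕ) (m' : Fin p → List ℕ), 0 < k ∧ n = k * n' ∧
    (∀ j, m j = (m' j).map (fun x => k * x)) ∧ IsBasic p n' m' ∧
    (k = 1 ∨ idx p n' m' ≠ 0)

/-- Normalization: the elaborated form of the sum of squares in `idx`
(using a coerced list) agrees with the directly mapped form. -/
lemma map_sq_norm (l : List ℕ) :
    (l.map (fun x => (x : ℤ) ^ 2)).sum = (l.map (fun x : ℕ => (x : ℤ) ^ 2)).sum := by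
  induction l with
  | nil => rfl
  | cons a t ih => simpa using ih

/-- Pure arithmetic heart of the per-partition inequality. -/
lemma arith_key (A e q : ℤ) (hA : 1 ≤ A) (he : 1 ≤ e) (h1 : q ≤ e * e) (h2 : q ≤ A * e) :
    ((A + e) ^ 2 - 4) * e + 2 * (A + e) ≤ (A + e) * ((A + e) ^ 2 - (A ^ 2 + q)) := by
  rcases le_total A e with h | h
  · nlinarith [mul_nonneg (by linarith : (0:ℤ) ≤ A + e) (by linarith : (0:ℤ) ≤ A * e - q)]
  · nlinarith [mul_nonneg (by linarith : (0:ℤ) ≤ A - e) (by nlinarith : (0:ℤ) ≤ e * (A + e) - 2),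
      mul_le_mul_of_nonneg_left h1 (by linarith : (0:ℤ) ≤ A + e)]

/-- Per-partition key inequality: `(n²-4)(n - m₁) + 2n ≤ n(n² - Σ mᵢ²)`. -/
lemma partition_key (l : List ℕ) (n : ℕ) (hs : l.Pairwise (· ≥ ·)) (hpos : ∀ x ∈ l, 0 < x)
    (hsum : l.sum = n) (hlen : 2 ≤ l.length) :
    ((n : ℤ) ^ 2 - 4) * ((n : ℤ) - (l.headI : ℤ)) + 2 * (n : ℤ)
      ≤ (n : ℤ) * ((n : ℤ) ^ 2 - (l.map (fun x : ℕ => (x : ℤ) ^ 2)).sum) := by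
  match l, hlen with
  | a :: b :: T, _ =>
    have hposr : ∀ x ∈ b :: T, 0 < x := fun x hx => hpos x (List.mem_cons_of_mem a hx)
    have hle_a : ∀ x ∈ b :: T, x ≤ a := fun x hx => (List.pairwise_cons.1 hs).1 x hx
    have hle_s : ∀ x ∈ b :: T, x ≤ (b :: T).sum := fun x hx => List.le_sum_of_mem hx
    have hA : 1 ≤ (a : ℤ) := by exact_mod_cast hpos a List.mem_cons_self
    have he : 1 ≤ ((b :: T).sum : ℤ) := by
      exact_mod_cast List.sum_pos (b :: T) hposr (by simp)
    have hcast : ((b :: T).map (fun x : ℕ => (x : ℤ))).sum = ((b :: T).sum : ℤ) :=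
      (Nat.cast_list_sum _).symm
    have h1 : ((b :: T).map (fun x : ℕ => (x : ℤ) ^ 2)).sum
        ≤ ((b :: T).sum : ℤ) * ((b :: T).sum : ℤ) := by
      have step : ((b :: T).map (fun x : ℕ => (x : ℤ) ^ 2)).sum
          ≤ ((b :: T).map (fun x : ℕ => (x : ℤ) * ((b :: T).sum : ℤ))).sum := by
        apply List.sum_le_sum
        intro i hi
        have hi1 : (i : ℤ) ≤ ((b :: T).sum : ℤ) := by exact_mod_cast hle_s i hi
        have hi0 : (0 : ℤ) ≤ (i : ℤ) := Int.natCast_nonneg i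
        nlinarith
      rwa [List.sum_map_mul_right, hcast] at step
    have h2 : ((b :: T).map (fun x : ℕ => (x : ℤ) ^ 2)).sum ≤ (a : ℤ) * ((b :: T).sum : ℤ) := by
      have step : ((b :: T).map (fun x : ℕ => (x : ℤ) ^ 2)).sum
          ≤ ((b :: T).map (fun x : ℕ => (x : ℤ) * (a : ℤ))).sum := by
        apply List.sum_le_sum
        intro i hi
        have hi1 : (i : ℤ) ≤ (a : ℤ) := by exact_mod_cast hle_a i hi
        have hi0 : (0 : ℤ) ≤ (i : ℤ) := Int.natCast_nonneg i
        nlinarith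
      rw [List.sum_map_mul_right, hcast] at step
      calc ((b :: T).map (fun x : ℕ => (x : ℤ) ^ 2)).sum ≤ ((b :: T).sum : ℤ) * a := step
        _ = (a : ℤ) * ((b :: T).sum : ℤ) := mul_comm _ _
    have hn : (n : ℤ) = (a : ℤ) + ((b :: T).sum : ℤ) := by
      rw [← hsum, List.sum_cons]; push_cast; ring
    have hhead : (((a :: b :: T).headI : ℕ) : ℤ) = (a : ℤ) := rfl
    have hq2 : ((a :: b :: T).map (fun x : ℕ => (x : ℤ) ^ 2)).sum
        = (a : ℤ) ^ 2 + ((b :: T).map (fun x : ℕ => (x : ℤ) ^ 2)).sum := by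
      simp
    rw [hhead, hn, hq2, add_sub_cancel_left]
    exact arith_key (a : ℤ) ((b :: T).sum : ℤ) _ hA he h1 h2

/-- The main bound for basic tuples: `2p ≤ |idx| + 8`. -/
lemma basic_bound (p n : ℕ) (m : Fin p → List ℕ) (hb : IsBasic p n m) :
    2 * (p : ℤ) ≤ |idx p n m| + 8 := by
  obtain ⟨⟨hn, ht⟩, hsum2n, -⟩ := hb
  rcases Nat.eq_zero_or_pos p with hp | hp
  · subst hp
    have := abs_nonneg (idx 0 n m)
    norm_num
    linarith
  · have j0 : Fin p := ⟨0, hp⟩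
    have hn2 : 2 ≤ n := by
      obtain ⟨hsrt, hps, hsm, hl⟩ := ht j0
      calc 2 ≤ (m j0).length := hl
        _ ≤ (m j0).sum := List.length_le_sum_of_one_le _ (fun i hi => hps i hi)
        _ = n := hsm
    have key : ∀ j : Fin p,
        ((n : ℤ) ^ 2 - 4) * ((n : ℤ) - ((m j).headI : ℤ)) + 2 * (n : ℤ)
          ≤ (n : ℤ) * ((n : ℤ) ^ 2 - ((m j).map (fun x : ℕ => (x : ℤ) ^ 2)).sum) := by
      intro j
      obtain ⟨hsrt, hps, hsm, hl⟩ := ht j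
      exact partition_key (m j) n hsrt hps hsm hl
    have hsumkey := Finset.sum_le_sum (fun j (_ : j ∈ Finset.univ) => key j)
    rw [Finset.sum_add_distrib, ← Finset.mul_sum,
      Finset.sum_const, Finset.card_univ, Fintype.card_fin, nsmul_eq_mul] at hsumkey
    -- hsumkey : (n²-4) * Σ(n - head) + p * (2n) ≤ n * Σ(n² - Q j)
    have hfac : ((n : ℤ) ^ 2 - 4) * (2 * (n : ℤ))
        ≤ ((n : ℤ) ^ 2 - 4) * (∑ j : Fin p, ((n : ℤ) - ((m j).headI : ℤ))) := by
      apply mul_le_mul_of_nonneg_left hsum2n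
      have : (2 : ℤ) ≤ (n : ℤ) := by exact_mod_cast hn2
      nlinarith
    have hnpos : (0 : ℤ) < (n : ℤ) := by exact_mod_cast hn
    have hdiv : 2 * ((n : ℤ) ^ 2 - 4) + 2 * (p : ℤ)
        ≤ ∑ j : Fin p, ((n : ℤ) ^ 2 - ((m j).map (fun x : ℕ => (x : ℤ) ^ 2)).sum) := by
      have hmul : (n : ℤ) * (2 * ((n : ℤ) ^ 2 - 4) + 2 * (p : ℤ))
          ≤ (n : ℤ) * (∑ j : Fin p, ((n : ℤ) ^ 2 - ((m j).map (fun x : ℕ => (x : ℤ) ^ 2)).sum)) := by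
        rw [Finset.mul_sum]
        nlinarith [hfac, hsumkey]
      exact le_of_mul_le_mul_left hmul hnpos
    have hidx : idx p n m
        = 2 * (n : ℤ) ^ 2 - ∑ j : Fin p, ((n : ℤ) ^ 2 - ((m j).map (fun x : ℕ => (x : ℤ) ^ 2)).sum) := by
      unfold idx
      congr 1
      exact Finset.sum_congr rfl (fun j _ => by rw [map_sq_norm])
    have : idx p n m ≤ 8 - 2 * (p : ℤ) := by rw [hidx]; linarith
    have habs := neg_le_abs (idx p n m)
    linarith

/-- Scaling: `idx` of a `k`-multiple is `k²` times `idx`. -/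
lemma idx_mul (p k n' : ℕ) (m m' : Fin p → List ℕ)
    (hm : ∀ j, m j = (m' j).map (fun x => k * x)) :
    idx p (k * n') m = (k : ℤ) ^ 2 * idx p n' m' := by
  have hq : ∀ j, ((m j).map (fun x : ℕ => (x : ℤ) ^ 2)).sum
      = (k : ℤ) ^ 2 * ((m' j).map (fun x : ℕ => (x : ℤ) ^ 2)).sum := by
    intro j
    rw [hm j, List.map_map]
    have hfun : ((fun x : ℕ => (x : ℤ) ^ 2) ∘ fun x : ℕ => k * x)
        = fun x : ℕ => (k : ℤ) ^ 2 * ((x : ℤ) ^ 2) := by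
      funext x
      simp only [Function.comp_apply]
      push_cast
      ring
    rw [hfun, List.sum_map_mul_left]
  unfold idx
  simp only [map_sq_norm, hq]
  have hsum : ∑ j : Fin p, (((k * n' : ℕ) : ℤ) ^ 2
      - (k : ℤ) ^ 2 * ((m' j).map (fun x : ℕ => (x : ℤ) ^ 2)).sum)
      = ∑ j : Fin p, (k : ℤ) ^ 2 * (((n' : ℕ) : ℤ) ^ 2
      - ((m' j).map (fun x : ℕ => (x : ℤ) ^ 2)).sum) := by
    apply Finset.sum_congr rfl
    intro j _
    push_cast
    ring
  rw [hsum, ← Finset.mul_sum]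
  push_cast
  ring

/-- If `m` is a fundamental tuple of `p` partitions of `n`, then `p ≤ |idx m|/2 + 4`. -/
theorem p_bound_of_fundamental (p n : ℕ) (m : Fin p → List ℕ)
    (hfund : IsFundamental p n m) :
    (p : ℤ) ≤ |idx p n m| / 2 + 4 := by
  obtain ⟨k, n', m', hk, hn, hm, hbasic, -⟩ := hfund
  have hb2 := basic_bound p n' m' hbasic
  have hidx : idx p n m = (k : ℤ) ^ 2 * idx p n' m' := by
    rw [hn] at *
    exact idx_mul p k n' m m' hm
  have habs : |idx p n m| = (k : ℤ) ^ 2 * |idx p n' m'| := by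
    rw [hidx, abs_mul, abs_of_nonneg (by positivity : (0 : ℤ) ≤ (k : ℤ) ^ 2)]
  have hk1 : (1 : ℤ) ≤ (k : ℤ) ^ 2 := by
    have : (1 : ℤ) ≤ (k : ℤ) := by exact_mod_cast hk
    nlinarith
  have hmono : |idx p n' m'| ≤ |idx p n m| := by
    rw [habs]
    exact le_mul_of_one_le_left (abs_nonneg _) hk1
  have h2 : ((p : ℤ) - 4) * 2 ≤ |idx p n m| := by linarith
  have := (Int.le_ediv_iff_mul_le (by norm_num : (0 : ℤ) < 2)).2 h2
  linarith
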